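/- Let m ≥ 1 and t ≥ 1, let 0 < ε ≤ 2, and let μ be a probability measure on Fin m with ∑_{j} |μ {j} − 1/m| ≥ ε (i.e. μ is ε-far from uniform in L₁-distance). Write P j = μ {j} and define, on the product space (Fin t → Fin m) with measure μ^{⊗t}, the random variable W̃(ω) = ∑_{j < t} min(3/m, P(ω j)). Then the probability of the event { ω : W̃(ω) ≤ (1 + 3ε²/16)·t/m } is at most exp(−ε⁴·t/4608). -/

import Mathlib

open MeasureTheory Real Finset

/-- Concentration in the far-from-uniform case: if `μ` is `ε`-far from uniform
in `L₁`, then the truncated empirical weight `W̃(ω) = ∑_{j<t} min(3/m, P(ω j))`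
of `t` i.i.d. samples is at most `(1 + 3ε²/16)·t/m` with probability at most
`exp(−ε⁴t/4608)`. -/

lemma exp_neg_le_quad {x : ℝ} (hx : 0 ≤ x) :
    Real.exp (-x) ≤ 1 - x + x ^ 2 / 2 := by
  have h1 : 1 + x + x ^ 2 / 2 ≤ Real.exp x := by
    have h := Real.sum_le_exp_of_nonneg hx 3
    simp [Finset.sum_range_succ, Nat.factorial] at h
    linarith
  have h2 : (0:ℝ) < 1 + x + x ^ 2 / 2 := by nlinarith
  rw [Real.exp_neg]
  have h3 : (Real.exp x)⁻¹ ≤ (1 + x + x ^ 2 / 2)⁻¹ :=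
    inv_anti₀ h2 h1
  refine h3.trans ?_
  rw [inv_eq_one_div, div_le_iff₀ h2]
  nlinarith [pow_nonneg hx 4]


lemma mean_bound (m : ℕ) (hm : 1 ≤ m) (P : Fin m → ℝ) (hPnn : ∀ k, 0 ≤ P k)
    (hPsum : ∑ k, P k = 1) (ε : ℝ) (hε₀ : 0 < ε) (hε₂ : ε ≤ 2)
    (hfar : ε ≤ ∑ k, |P k - 1 / m|) :
    (1 + ε ^ 2 / 4) / m ≤ ∑ k, P k * min (3 / (m:ℝ)) (P k) := by
  have hm' : (1:ℝ) ≤ m := by exact_mod_cast hm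
  have hm0 : (0:ℝ) < m := by linarith
  set δ : Fin m → ℝ := fun k => P k - 1 / m with hδ
  have hδsum : ∑ k, δ k = 0 := by
    simp only [hδ, Finset.sum_sub_distrib, hPsum, Finset.sum_const, Finset.card_univ,
      Fintype.card_fin, nsmul_eq_mul]
    field_simp
    norm_num
  set g : Fin m → ℝ := fun k => if P k ≤ 3 / m then δ k ^ 2 else δ k / m with hg
  have hterm : ∀ k, 1 / m ^ 2 + 2 * δ k / m + g k ≤ P k * min (3 / (m:ℝ)) (P k) := by
    intro k
    by_cases h : P k ≤ 3 / (m:ℝ)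
    · rw [min_eq_right h]
      simp only [hg, if_pos h]
      have heq : 1 / (m:ℝ) ^ 2 + 2 * δ k / m + δ k ^ 2 = P k * P k := by
        simp only [hδ]; field_simp; ring
      linarith [heq.le]
    · rw [min_eq_left (le_of_not_ge h)]
      simp only [hg, if_neg h]
      have hPk : P k = 1 / (m:ℝ) + δ k := by simp [hδ]
      have h1 : P k * (3 / (m:ℝ)) = 3 * (1 / (m:ℝ) ^ 2) + 3 * (δ k / m) := by
        rw [hPk]; field_simp
      have h0 : (0:ℝ) ≤ 1 / (m:ℝ) ^ 2 := by positivity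
      have h2 : 2 * δ k / (m:ℝ) = 2 * (δ k / m) := by ring
      have h3 : δ k / (m:ℝ) = 1 * (δ k / m) := by ring
      linarith
  have hsum1 : ∑ k, (1 / (m:ℝ) ^ 2 + 2 * δ k / m + g k) = 1 / m + ∑ k, g k := by
    rw [Finset.sum_add_distrib, Finset.sum_add_distrib]
    simp only [Finset.sum_const, Finset.card_univ, Fintype.card_fin, nsmul_eq_mul]
    rw [← Finset.sum_div, ← Finset.mul_sum] at *
    rw [hδsum]
    field_simp
    ring
  -- ∑ g ≥ ε²/(4m)
  set A : Finset (Fin m) := Finset.univ.filter (fun k => P k ≤ 3 / m) with hA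
  set B : Finset (Fin m) := Finset.univ.filter (fun k => ¬ P k ≤ 3 / m) with hB
  have hgsplit : ∑ k, g k = ∑ k ∈ A, δ k ^ 2 + ∑ k ∈ B, δ k / m := by
    rw [← Finset.sum_filter_add_sum_filter_not Finset.univ (fun k => P k ≤ 3 / m) g]
    congr 1
    · exact Finset.sum_congr rfl fun k hk => by
        simp only [hg]; rw [if_pos (Finset.mem_filter.mp hk).2]
    · exact Finset.sum_congr rfl fun k hk => by
        simp only [hg]; rw [if_neg (Finset.mem_filter.mp hk).2]
  set SA : ℝ := ∑ k ∈ A, |δ k| with hSA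
  set SB : ℝ := ∑ k ∈ B, δ k with hSB
  have hBpos : ∀ k ∈ B, 0 < δ k := by
    intro k hk
    have h := (Finset.mem_filter.mp hk).2
    push_neg at h
    simp only [hδ]
    have : (1:ℝ)/m < 3/m := by
      rw [div_lt_div_iff₀ hm0 hm0]; nlinarith
    linarith
  have hSBnn : 0 ≤ SB := Finset.sum_nonneg fun k hk => (hBpos k hk).le
  have hSAnn : 0 ≤ SA := Finset.sum_nonneg fun k _ => abs_nonneg _
  have hfar' : ε ≤ SA + SB := by
    have : ∑ k, |δ k| = SA + ∑ k ∈ B, |δ k| :=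
      (Finset.sum_filter_add_sum_filter_not Finset.univ (fun k => P k ≤ 3 / m) _).symm
    have hB' : ∑ k ∈ B, |δ k| = SB :=
      Finset.sum_congr rfl fun k hk => abs_of_pos (hBpos k hk)
    calc ε ≤ ∑ k, |δ k| := hfar
    _ = SA + SB := by rw [this, hB']
  have hSB1 : SB ≤ 1 := by
    have h1 : SB ≤ ∑ k ∈ B, P k := by
      refine Finset.sum_le_sum fun k _ => ?_
      simp only [hδ]
      have : (0:ℝ) ≤ 1/m := by positivity
      linarith
    have h2 : ∑ k ∈ B, P k ≤ ∑ k, P k :=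
      Finset.sum_le_sum_of_subset_of_nonneg (Finset.subset_univ _) fun k _ _ => hPnn k
    linarith [hPsum ▸ h2]
  have hCS : SA ^ 2 ≤ m * ∑ k ∈ A, δ k ^ 2 := by
    have := sq_sum_le_card_mul_sum_sq (s := A) (f := fun k => |δ k|)
    simp only [sq_abs] at this
    refine this.trans ?_
    have : (A.card : ℝ) ≤ m := by
      have := Finset.card_le_univ A
      simp only [Finset.card_univ, Fintype.card_fin] at this
      exact_mod_cast this
    exact mul_le_mul_of_nonneg_right this
      (Finset.sum_nonneg fun k _ => sq_nonneg (δ k))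
  have hAnn : 0 ≤ ∑ k ∈ A, δ k ^ 2 := Finset.sum_nonneg fun k _ => sq_nonneg _
  have hgain : ε ^ 2 / (4 * m) ≤ ∑ k, g k := by
    rw [hgsplit]
    have hBdiv : ∑ k ∈ B, δ k / m = SB / m := by rw [hSB, Finset.sum_div]
    rw [hBdiv]
    by_cases hc : ε ^ 2 / 4 ≤ SB
    · have : ε ^ 2 / (4 * m) ≤ SB / m := by
        rw [div_le_div_iff₀ (by positivity) hm0]
        nlinarith
      linarith
    · push_neg at hc
      have hSA2 : ε / 2 ≤ SA := by nlinarith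
      have : ε ^ 2 / 4 ≤ SA ^ 2 := by nlinarith
      have h4 : ε ^ 2 / 4 ≤ m * ∑ k ∈ A, δ k ^ 2 := this.trans hCS
      have h5 : ε ^ 2 / (4 * m) ≤ ∑ k ∈ A, δ k ^ 2 := by
        rw [div_le_iff₀ (by positivity : (0:ℝ) < 4 * m)]
        calc ε ^ 2 ≤ 4 * (m * ∑ k ∈ A, δ k ^ 2) := by linarith
        _ = (∑ k ∈ A, δ k ^ 2) * (4 * m) := by ring
      have hSBm : 0 ≤ SB / m := by positivity
      linarith [h5]
  calc (1 + ε ^ 2 / 4) / m = 1 / m + ε ^ 2 / (4 * m) := by ring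
  _ ≤ 1 / m + ∑ k, g k := by linarith
  _ = ∑ k, (1 / (m:ℝ) ^ 2 + 2 * δ k / m + g k) := hsum1.symm
  _ ≤ ∑ k, P k * min (3 / (m:ℝ)) (P k) := Finset.sum_le_sum fun k _ => hterm k



theorem truncated_weight_far_case (m t : ℕ) (hm : 1 ≤ m) (ht : 1 ≤ t)
    (ε : ℝ) (hε₀ : 0 < ε) (hε₂ : ε ≤ 2)
    (μ : Measure (Fin m)) [IsProbabilityMeasure μ]
    (hfar : ε ≤ ∑ j : Fin m, |(μ {j}).toReal - 1 / m|) :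
    (Measure.pi fun _ : Fin t => μ)
      {ω : Fin t → Fin m |
        ∑ j : Fin t, min (3 / (m : ℝ)) (μ {ω j}).toReal ≤ (1 + 3 * ε ^ 2 / 16) * t / m}
      ≤ ENNReal.ofReal (Real.exp (-(ε ^ 4 * t / 4608))) := by
  classical
  have hm' : (1:ℝ) ≤ m := by exact_mod_cast hm
  have hm0 : (0:ℝ) < m := by linarith
  have ht' : (1:ℝ) ≤ t := by exact_mod_cast ht
  have ht0 : (0:ℝ) < t := by linarith
  set P : Fin m → ℝ := fun k => (μ {k}).toReal with hPdef
  have hPnn : ∀ k, 0 ≤ P k := fun k => ENNReal.toReal_nonneg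
  have hPsum : ∑ k, P k = 1 := by
    have h := MeasureTheory.integral_fintype (μ := μ) (f := fun _ => (1:ℝ)) (integrable_const 1)
    exact (by simpa using h.symm : ∑ k, μ.real {k} = 1)
  set X : Fin m → ℝ := fun k => min (3 / (m:ℝ)) (P k) with hXdef
  have hX0 : ∀ k, 0 ≤ X k := fun k => le_min (by positivity) (hPnn k)
  have hXc : ∀ k, X k ≤ 3 / m := fun k => min_le_left _ _
  set l : ℝ := ε ^ 2 * m / 144 with hldef
  have hl0 : 0 < l := by positivity
  set EX : ℝ := ∑ k, P k * X k with hEXdef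
  have hEXlb : (1 + ε ^ 2 / 4) / m ≤ EX :=
    mean_bound m hm P hPnn hPsum ε hε₀ hε₂ hfar
  set ν : Measure (Fin t → Fin m) := Measure.pi fun _ => μ with hν
  haveI : IsProbabilityMeasure ν := by rw [hν]; infer_instance
  set W : (Fin t → Fin m) → ℝ := fun ω => ∑ j, X (ω j) with hWdef
  set a : ℝ := (1 + 3 * ε ^ 2 / 16) * t / m with ha
  have hint : Integrable (fun ω => Real.exp (-l * W ω)) ν := .of_finite
  have key := ProbabilityTheory.measure_le_le_exp_mul_mgf (μ := ν) (X := W) a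
    (neg_nonpos.mpr hl0.le) hint
  set q : ℝ := ∑ k, P k * Real.exp (-l * X k) with hqdef
  have hq0 : 0 ≤ q :=
    Finset.sum_nonneg fun k _ => mul_nonneg (hPnn k) (Real.exp_pos _).le
  -- mgf factorization
  have hmgf : ProbabilityTheory.mgf W ν (-l) = q ^ t := by
    letI : MeasureSpace (Fin m) := ⟨μ⟩
    haveI : SigmaFinite (volume : Measure (Fin m)) := inferInstanceAs (SigmaFinite μ)
    have hvol : ν = (volume : Measure (Fin t → Fin m)) := rfl
    rw [ProbabilityTheory.mgf]
    calc ∫ ω, Real.exp (-l * W ω) ∂ν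
        = ∫ ω : Fin t → Fin m, ∏ j, Real.exp (-l * X (ω j)) := by
          rw [hvol]
          congr 1
          ext ω
          rw [← Real.exp_sum]
          congr 1
          rw [hWdef, Finset.mul_sum]
      _ = (∫ k, Real.exp (-l * X k)) ^ (Fintype.card (Fin t)) :=
          MeasureTheory.integral_fintype_prod_eq_pow (fun k => Real.exp (-l * X k))
      _ = q ^ t := by
          rw [MeasureTheory.integral_fintype Integrable.of_finite, Fintype.card_fin]
          simp only [smul_eq_mul]
          rfl
  -- per-sample mgf bound
  have hX2 : ∑ k, P k * X k ^ 2 ≤ (3 / m) ^ 2 := by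
    calc ∑ k, P k * X k ^ 2 ≤ ∑ k, P k * (3 / (m:ℝ)) ^ 2 :=
          Finset.sum_le_sum fun k _ => mul_le_mul_of_nonneg_left
            (pow_le_pow_left₀ (hX0 k) (hXc k) 2) (hPnn k)
      _ = (3 / m) ^ 2 := by rw [← Finset.sum_mul, hPsum, one_mul]
  have hqle : q ≤ Real.exp (-l * EX + l ^ 2 * (3 / m) ^ 2 / 2) := by
    have step1 : q ≤ ∑ k, P k * (1 - l * X k + (l * X k) ^ 2 / 2) := by
      refine Finset.sum_le_sum fun k _ => mul_le_mul_of_nonneg_left ?_ (hPnn k)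
      have hx : 0 ≤ l * X k := mul_nonneg hl0.le (hX0 k)
      have := exp_neg_le_quad hx
      have hrw : -l * X k = -(l * X k) := by ring
      rw [hrw]
      exact this
    have step2 : ∑ k, P k * (1 - l * X k + (l * X k) ^ 2 / 2)
        = 1 - l * EX + l ^ 2 * (∑ k, P k * X k ^ 2) / 2 := by
      have h1 : ∀ k ∈ Finset.univ, P k * (1 - l * X k + (l * X k) ^ 2 / 2)
          = P k - l * (P k * X k) + l ^ 2 / 2 * (P k * X k ^ 2) := fun k _ => by ring
      rw [Finset.sum_congr rfl h1, Finset.sum_add_distrib, Finset.sum_sub_distrib,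
        ← Finset.mul_sum, ← Finset.mul_sum, hPsum, hEXdef]
      ring
    have step3 : 1 - l * EX + l ^ 2 * (∑ k, P k * X k ^ 2) / 2
        ≤ 1 - l * EX + l ^ 2 * (3 / m) ^ 2 / 2 := by nlinarith [sq_nonneg l]
    have step4 := Real.add_one_le_exp (-l * EX + l ^ 2 * (3 / m) ^ 2 / 2)
    linarith
  -- exponent arithmetic
  have hexp : l * a + t * (-l * EX + l ^ 2 * (3 / m) ^ 2 / 2) ≤ -(ε ^ 4 * t / 4608) := by
    have h1 : (t:ℝ) * (-l * EX) ≤ t * (-l * ((1 + ε ^ 2 / 4) / m)) := by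
      apply mul_le_mul_of_nonneg_left _ ht0.le
      have := mul_le_mul_of_nonneg_left hEXlb hl0.le
      linarith
    have h2 : l * a + (t:ℝ) * (-l * ((1 + ε ^ 2 / 4) / m)) + t * (l ^ 2 * (3 / m) ^ 2 / 2)
        = -(ε ^ 4 * t / 4608) := by
      rw [hldef, ha]
      field_simp
      ring
    have h3 : l * a + (t:ℝ) * (-l * EX + l ^ 2 * (3 / m) ^ 2 / 2)
        = l * a + t * (-l * EX) + t * (l ^ 2 * (3 / m) ^ 2 / 2) := by ring
    rw [h3]
    linarith
  -- final assembly
  have hsetEq : {ω : Fin t → Fin m |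
      ∑ j : Fin t, min (3 / (m : ℝ)) (μ {ω j}).toReal ≤ (1 + 3 * ε ^ 2 / 16) * t / m}
      = {ω | W ω ≤ a} := rfl
  have hreal : (ν {ω | W ω ≤ a}).toReal ≤ Real.exp (-(ε ^ 4 * t / 4608)) := by
    refine key.trans ?_
    have hmg : ProbabilityTheory.mgf W ν (-l) ≤
        Real.exp (-l * EX + l ^ 2 * (3 / m) ^ 2 / 2) ^ t := by
      rw [hmgf]
      exact pow_le_pow_left₀ hq0 hqle t
    calc Real.exp (-(-l) * a) * ProbabilityTheory.mgf W ν (-l)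
        ≤ Real.exp (-(-l) * a) * Real.exp (-l * EX + l ^ 2 * (3 / m) ^ 2 / 2) ^ t :=
          mul_le_mul_of_nonneg_left hmg (Real.exp_pos _).le
      _ = Real.exp (l * a + t * (-l * EX + l ^ 2 * (3 / m) ^ 2 / 2)) := by
          rw [← Real.exp_nat_mul, ← Real.exp_add]
          ring_nf
      _ ≤ Real.exp (-(ε ^ 4 * t / 4608)) := Real.exp_le_exp.mpr hexp
  rw [show (Measure.pi fun _ : Fin t => μ) = ν from hν.symm] at *
  rw [hsetEq, ← ENNReal.ofReal_toReal (measure_ne_top ν _)]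
  exact ENNReal.ofReal_le_ofReal hreal
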